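/- arXiv:1604.04919 — 3 statements merged into one kernel-verified Lean document; each statement's English description precedes it below -/
import Mathlib

section
/- Let λ₁, λ₂ : [0, r₀) → ℝ be functions with λ₁(0) = λ₂(0) = 0 that are continuous at 0, and suppose there exist constants a, b ∈ ℝ and C > 0 with |λ₁(r) − a r| ≤ C(λ₁(r)² + λ₂(r)²) and |λ₂(r) − b r| ≤ C(λ₁(r)² + λ₂(r)²) for all r ∈ [0, r₀). Then λ₁(r) = a r + O(r²) and λ₂(r) = b r + O(r²) as r → 0⁺. -/
open Set Asymptotics

lemma lambda_key {C a b x y r : ℝ} (hC : 0 < C) (hr : 0 ≤ r)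
    (hx : |x| ≤ 1/(4*C)) (hy : |y| ≤ 1/(4*C))
    (h1 : |x - a*r| ≤ C*(x^2+y^2)) (h2 : |y - b*r| ≤ C*(x^2+y^2)) :
    |x - a*r| ≤ 4*C*(|a|+|b|)^2 * r^2 := by
  have hax : |x| - |a| * r ≤ C*(x^2+y^2) := by
    have := abs_sub_abs_le_abs_sub x (a*r)
    rw [abs_mul, abs_of_nonneg hr] at this
    linarith
  have hby : |y| - |b| * r ≤ C*(x^2+y^2) := by
    have := abs_sub_abs_le_abs_sub y (b*r)
    rw [abs_mul, abs_of_nonneg hr] at this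
    linarith
  have hS : C*(x^2+y^2) ≤ (|x|+|y|)/4 := by
    have h1 : C * |x| * |x| ≤ C * (1/(4*C)) * |x| :=
      mul_le_mul_of_nonneg_right (mul_le_mul_of_nonneg_left hx hC.le) (abs_nonneg x)
    have h2 : C * |y| * |y| ≤ C * (1/(4*C)) * |y| :=
      mul_le_mul_of_nonneg_right (mul_le_mul_of_nonneg_left hy hC.le) (abs_nonneg y)
    have hc : C * (1/(4*C)) = 1/4 := by field_simp
    rw [hc] at h1 h2
    nlinarith [sq_abs x, sq_abs y]
  have hT : |x| + |y| ≤ 2*(|a|+|b|)*r := by linarith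
  have hS2 : x^2 + y^2 ≤ (2*(|a|+|b|)*r)^2 := by
    nlinarith [sq_abs x, sq_abs y, abs_nonneg x, abs_nonneg y, mul_nonneg (abs_nonneg x) (abs_nonneg y)]
  calc |x - a*r| ≤ C*(x^2+y^2) := h1
    _ ≤ C * (2*(|a|+|b|)*r)^2 := by nlinarith
    _ = 4*C*(|a|+|b|)^2 * r^2 := by ring

theorem lambda_linear_expansion {r₀ : ℝ} (hr₀ : 0 < r₀)
    (lam₁ lam₂ : ℝ → ℝ)
    (h₁0 : lam₁ 0 = 0) (h₂0 : lam₂ 0 = 0)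
    (hc₁ : ContinuousWithinAt lam₁ (Ici 0) 0)
    (hc₂ : ContinuousWithinAt lam₂ (Ici 0) 0)
    (a b C : ℝ) (hC : 0 < C)
    (hb₁ : ∀ r ∈ Ico (0:ℝ) r₀, |lam₁ r - a * r| ≤ C * ((lam₁ r) ^ 2 + (lam₂ r) ^ 2))
    (hb₂ : ∀ r ∈ Ico (0:ℝ) r₀, |lam₂ r - b * r| ≤ C * ((lam₁ r) ^ 2 + (lam₂ r) ^ 2)) :
    ((fun r => lam₁ r - a * r) =O[nhdsWithin 0 (Ioi 0)] fun r => r ^ 2) ∧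
      ((fun r => lam₂ r - b * r) =O[nhdsWithin 0 (Ioi 0)] fun r => r ^ 2) := by
  have hεpos : (0:ℝ) < 1/(4*C) := by positivity
  have hmono : nhdsWithin (0:ℝ) (Ioi 0) ≤ nhdsWithin 0 (Ici 0) :=
    nhdsWithin_mono 0 Ioi_subset_Ici_self
  have h1 : ∀ᶠ r in nhdsWithin (0:ℝ) (Ioi 0), |lam₁ r| ≤ 1/(4*C) := by
    have ht := hc₁.tendsto
    rw [h₁0] at ht
    have := ht (Metric.closedBall_mem_nhds (0:ℝ) hεpos)
    filter_upwards [hmono this] with r hr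
    simpa [Real.dist_eq] using hr
  have h2 : ∀ᶠ r in nhdsWithin (0:ℝ) (Ioi 0), |lam₂ r| ≤ 1/(4*C) := by
    have ht := hc₂.tendsto
    rw [h₂0] at ht
    have := ht (Metric.closedBall_mem_nhds (0:ℝ) hεpos)
    filter_upwards [hmono this] with r hr
    simpa [Real.dist_eq] using hr
  have h3 : ∀ᶠ r in nhdsWithin (0:ℝ) (Ioi 0), r ∈ Ico (0:ℝ) r₀ := by
    have hlt : ∀ᶠ r in nhdsWithin (0:ℝ) (Ioi 0), r < r₀ :=
      eventually_nhdsWithin_of_eventually_nhds (Filter.Tendsto.eventually_lt_const hr₀ Filter.tendsto_id)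
    filter_upwards [hlt, self_mem_nhdsWithin] with r h h'
    exact ⟨le_of_lt h', h⟩
  constructor
  · rw [isBigO_iff]
    refine ⟨4*C*(|a|+|b|)^2, ?_⟩
    filter_upwards [h1, h2, h3, self_mem_nhdsWithin] with r hr1 hr2 hr3 hr4
    have := lambda_key hC (le_of_lt hr4) hr1 hr2 (hb₁ r hr3) (hb₂ r hr3)
    simpa [abs_of_nonneg (sq_nonneg r)] using this
  · rw [isBigO_iff]
    refine ⟨4*C*(|a|+|b|)^2, ?_⟩
    filter_upwards [h1, h2, h3, self_mem_nhdsWithin] with r hr1 hr2 hr3 hr4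
    have hkey : |lam₂ r - b*r| ≤ 4*C*(|b|+|a|)^2 * r^2 :=
      lambda_key hC (le_of_lt hr4) hr2 hr1
        (by rw [add_comm ((lam₂ r)^2)]; exact hb₂ r hr3)
        (by rw [add_comm ((lam₂ r)^2)]; exact hb₁ r hr3)
    have : |b|+|a| = |a|+|b| := by ring
    rw [this] at hkey
    simpa [abs_of_nonneg (sq_nonneg r)] using hkey
end

section
/- Let μ be a measure on X and let A_r, B_r (r ∈ [0, r₀)) be families of measurable sets of finite measure with A_0 = B_0. Suppose r ↦ μ(A_r) is differentiable at 0 with derivative d > 0, and r ↦ μ(A_r Δ B_r) is differentiable at 0 with derivative 0 (and value 0 at r = 0). Then r ↦ μ(B_r) is differentiable at 0 with derivative d; in particular there is δ > 0 with μ(B_r) > μ(B_0) for r ∈ (0, δ). -/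
open Set MeasureTheory

theorem measure_deriv_transfer {X : Type*} [MeasurableSpace X] (μ : Measure X)
    {r₀ : ℝ} (hr₀ : 0 < r₀) (A B : ℝ → Set X)
    (hAm : ∀ r ∈ Ico (0:ℝ) r₀, MeasurableSet (A r))
    (hBm : ∀ r ∈ Ico (0:ℝ) r₀, MeasurableSet (B r))
    (hAfin : ∀ r ∈ Ico (0:ℝ) r₀, μ (A r) < ⊤)
    (hBfin : ∀ r ∈ Ico (0:ℝ) r₀, μ (B r) < ⊤)
    (h0 : A 0 = B 0)
    (d : ℝ) (hd : 0 < d)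
    (hA' : HasDerivWithinAt (fun r => (μ (A r)).toReal) d (Ici 0) 0)
    (hΔ0 : μ (symmDiff (A 0) (B 0)) = 0)
    (hΔ' : HasDerivWithinAt (fun r => (μ (symmDiff (A r) (B r))).toReal) 0 (Ici 0) 0) :
    HasDerivWithinAt (fun r => (μ (B r)).toReal) d (Ici 0) 0 ∧
      ∃ δ > 0, ∀ r ∈ Ioo (0:ℝ) δ, (μ (B 0)).toReal < (μ (B r)).toReal := by
  have f0g0 : (μ (A 0)).toReal = (μ (B 0)).toReal := by rw [h0]
  have hIci : Ici (0:ℝ) \ {0} = Ioi 0 := by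
    ext x; simp [lt_iff_le_and_ne, eq_comm, and_comm]
  rw [hasDerivWithinAt_iff_tendsto_slope, hIci] at hA' hΔ' ⊢
  have hmem : Ioo (0:ℝ) r₀ ∈ nhdsWithin 0 (Ioi 0) :=
    Ioo_mem_nhdsGT_of_mem ⟨le_refl 0, hr₀⟩
  have hbound : ∀ᶠ r in nhdsWithin 0 (Ioi 0),
      |slope (fun r => (μ (B r)).toReal) 0 r - slope (fun r => (μ (A r)).toReal) 0 r|
        ≤ slope (fun r => (μ (symmDiff (A r) (B r))).toReal) 0 r := by
    filter_upwards [hmem, self_mem_nhdsWithin] with r hr hrpos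
    have hr' : r ∈ Ico (0:ℝ) r₀ := ⟨le_of_lt hr.1, hr.2⟩
    have hab : |(μ (A r)).toReal - (μ (B r)).toReal| ≤ (μ (symmDiff (A r) (B r))).toReal :=
      abs_measureReal_sub_le_measureReal_symmDiff' (hAm r hr').nullMeasurableSet
        (hBm r hr').nullMeasurableSet (hAfin r hr').ne (hBfin r hr').ne
    have h0' : (μ (symmDiff (A 0) (B 0))).toReal = 0 := by rw [hΔ0]; simp
    have hrpos' : (0:ℝ) < r := hrpos
    simp only [slope_def_field, h0', f0g0, sub_zero]
    rw [div_sub_div_same, show (μ (B r)).toReal - (μ (B 0)).toReal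
        - ((μ (A r)).toReal - (μ (B 0)).toReal)
        = (μ (B r)).toReal - (μ (A r)).toReal by ring,
      abs_div, abs_of_pos hrpos', abs_sub_comm]
    gcongr
  have hdiff : Filter.Tendsto
      (fun r => slope (fun r => (μ (B r)).toReal) 0 r
        - slope (fun r => (μ (A r)).toReal) 0 r) (nhdsWithin 0 (Ioi 0)) (nhds 0) := by
    refine squeeze_zero_norm' ?_ hΔ'
    filter_upwards [hbound] with r hr using hr
  have hB' : Filter.Tendsto (fun r => slope (fun r => (μ (B r)).toReal) 0 r)
      (nhdsWithin 0 (Ioi 0)) (nhds d) := by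
    have := hA'.add hdiff
    simpa using this
  refine ⟨hB', ?_⟩
  have hpos : ∀ᶠ r in nhdsWithin 0 (Ioi 0),
      0 < slope (fun r => (μ (B r)).toReal) 0 r :=
    hB'.eventually (eventually_gt_nhds hd)
  rw [Filter.eventually_iff, mem_nhdsGT_iff_exists_Ioo_subset] at hpos
  obtain ⟨u, hu, hsub⟩ := hpos
  refine ⟨u, hu, fun r hr => ?_⟩
  have := hsub hr
  simp only [mem_setOf_eq, slope_def_field, sub_zero] at this
  have hrpos : (0:ℝ) < r := hr.1
  nlinarith [mul_pos this hrpos,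
    div_mul_cancel₀ ((μ (B r)).toReal - (μ (B 0)).toReal) hrpos.ne']
end

section
/- Let u : [0, r₀) → ℝ² with u(0) = (0,0), u continuous at 0, and suppose u(r) = L r + R(r) where L ∈ ℝ² and |R(r)| ≤ C |u(r)|² for a constant C. Then u is differentiable at 0 with u'(0) = L. -/
open Set

theorem hasDerivWithinAt_of_quadratic_selfBound {r₀ : ℝ} (hr₀ : 0 < r₀)
    (u : ℝ → ℝ × ℝ) (hu0 : u 0 = 0)
    (hc : ContinuousWithinAt u (Ici 0) 0)
    (L : ℝ × ℝ) (C : ℝ)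
    (hR : ∀ r ∈ Ico (0:ℝ) r₀, ‖u r - r • L‖ ≤ C * ‖u r‖ ^ 2) :
    HasDerivWithinAt u L (Ici 0) 0 := by
  rw [hasDerivWithinAt_iff_tendsto_slope, tendsto_iff_norm_sub_tendsto_zero]
  set ε : ℝ := 1 / (2 * (|C| + 1)) with hε
  have hεpos : 0 < ε := by positivity
  have hsmall : ∀ᶠ r in nhdsWithin 0 (Ici 0), ‖u r‖ < ε := by
    have h := hc.tendsto
    rw [hu0] at h
    filter_upwards [h (Metric.ball_mem_nhds 0 hεpos)] with r hr
    simpa [dist_eq_norm] using hr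
  have hsmall' : ∀ᶠ r in nhdsWithin 0 (Ici 0 \ {0}), ‖u r‖ < ε :=
    hsmall.filter_mono (nhdsWithin_mono 0 diff_subset)
  have hlt : ∀ᶠ r in nhdsWithin 0 (Ici 0 \ {0}), r < r₀ :=
    eventually_nhdsWithin_of_eventually_nhds (gt_mem_nhds hr₀)
  have hmem : ∀ᶠ r in nhdsWithin 0 (Ici 0 \ {0}), r ∈ Ici (0:ℝ) \ {0} :=
    eventually_mem_nhdsWithin
  have key : ∀ᶠ r in nhdsWithin 0 (Ici 0 \ {0}),
      ‖slope u 0 r - L‖ ≤ 4 * |C| * ‖L‖ ^ 2 * r := by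
    filter_upwards [hsmall', hlt, hmem] with r hsm hr₀' hrm
    have hr0 : 0 < r := lt_of_le_of_ne hrm.1 (Ne.symm hrm.2)
    have hR1 : ‖u r - r • L‖ ≤ |C| * ‖u r‖ ^ 2 := by
      refine (hR r ⟨hr0.le, hr₀'⟩).trans ?_
      have : C ≤ |C| := le_abs_self C
      nlinarith [sq_nonneg (‖u r‖)]
    have h1 : |C| * ‖u r‖ ≤ 1 / 2 := by
      have hC : (0:ℝ) ≤ |C| := abs_nonneg C
      have hun : 0 ≤ ‖u r‖ := norm_nonneg _
      have hd : ‖u r‖ * (2 * (|C| + 1)) < 1 := by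
        have h2p : (0:ℝ) < 2 * (|C| + 1) := by positivity
        have hsm' : ‖u r‖ < 1 / (2 * (|C| + 1)) := hsm
        have := (lt_div_iff₀ h2p).mp hsm'
        linarith
      nlinarith
    have hnsmul : ‖r • L‖ = r * ‖L‖ := by
      rw [norm_smul, Real.norm_eq_abs, abs_of_pos hr0]
    have h2 : ‖u r‖ ≤ 2 * r * ‖L‖ := by
      have htri : ‖u r‖ ≤ ‖u r - r • L‖ + ‖r • L‖ := by
        calc ‖u r‖ = ‖(u r - r • L) + r • L‖ := by ring_nf
          _ ≤ ‖u r - r • L‖ + ‖r • L‖ := norm_add_le _ _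
      nlinarith [norm_nonneg (u r)]
    have h3 : ‖u r - r • L‖ ≤ 4 * |C| * ‖L‖ ^ 2 * r ^ 2 := by
      have hC : (0:ℝ) ≤ |C| := abs_nonneg C
      have hsq : ‖u r‖ ^ 2 ≤ (2 * r * ‖L‖) ^ 2 :=
        pow_le_pow_left₀ (norm_nonneg _) h2 2
      calc ‖u r - r • L‖ ≤ |C| * ‖u r‖ ^ 2 := hR1
        _ ≤ |C| * (2 * r * ‖L‖) ^ 2 := mul_le_mul_of_nonneg_left hsq hC
        _ = 4 * |C| * ‖L‖ ^ 2 * r ^ 2 := by ring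
    have hslope : slope u 0 r - L = r⁻¹ • (u r - r • L) := by
      rw [slope_def_module, hu0, sub_zero, sub_zero, smul_sub, smul_smul,
        inv_mul_cancel₀ hr0.ne', one_smul]
    rw [hslope, norm_smul, Real.norm_eq_abs, abs_of_pos (inv_pos.mpr hr0)]
    rw [inv_mul_le_iff₀ hr0]
    calc ‖u r - r • L‖ ≤ 4 * |C| * ‖L‖ ^ 2 * r ^ 2 := h3
      _ = r * (4 * |C| * ‖L‖ ^ 2 * r) := by ring
  refine squeeze_zero' (Filter.Eventually.of_forall fun r => norm_nonneg _) key ?_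
  have : Filter.Tendsto (fun r : ℝ => 4 * |C| * ‖L‖ ^ 2 * r) (nhds 0) (nhds 0) := by
    have h := (continuous_const.mul continuous_id : Continuous fun r : ℝ => 4 * |C| * ‖L‖ ^ 2 * r).tendsto (0:ℝ)
    have h2 : Filter.Tendsto (fun r : ℝ => 4 * |C| * ‖L‖ ^ 2 * r) (nhds 0) (nhds (4 * |C| * ‖L‖ ^ 2 * 0)) := h
    simpa using h2
  exact this.mono_left nhdsWithin_le_nhds
end
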